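/- Let H = U(𝔤) be the universal enveloping algebra of a real Lie algebra 𝔤, B a right 𝔤-module *-algebra and M a right 𝔤-equivariant B-*-bimodule. Then restriction to 𝔤 gives an ℝ-linear isomorphism from the lazy Hochschild 1-cocycles ZH¹_ℓ(H;M) to the Lie algebra 1-cocycles Z¹(𝔤, Z_B(M)_sa), i.e. maps c : 𝔤 → Z_B(M)_sa with c(X)◁Y − c(Y)◁X − c([X,Y]) = 0; this isomorphism carries the Hochschild coboundaries to the Lie algebra coboundaries. -/

import Mathlib

open TensorProduct

section ConvolutionFramework

variable {k : Type*} [CommRing k] [StarRing k]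
variable {H : Type*} [Ring H] [HopfAlgebra k H] [StarRing H] [StarModule k H]
variable {B : Type*} [Ring B] [Algebra k B] [StarRing B] [StarModule k B]
variable {M : Type*} [AddCommGroup M] [Module k M] [StarAddMonoid M] [StarModule k M]

/-- The convolution product on `C(H,B) = Hom_k(H,B)`:
`(f ⋆ g)(h) = f(h₍₁₎) g(h₍₂₎)`. -/
noncomputable def conv (f g : H →ₗ[k] B) : H →ₗ[k] B :=
  LinearMap.mul' k B ∘ₗ TensorProduct.map f g ∘ₗ Coalgebra.comul

/-- The convolution unit `ε(·) 1_B`. -/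
noncomputable def convOne : H →ₗ[k] B :=
  Algebra.linearMap k B ∘ₗ Coalgebra.counit

/-- The involution on the convolution bimodule: `f*(h) = (f (S(h)*))*`. -/
noncomputable def convStar (f : H →ₗ[k] M) : H →ₗ[k] M where
  toFun h := star (f (star (HopfAlgebra.antipode (R := k) h)))
  map_add' x y := by simp
  map_smul' r x := by simp [star_smul]

/-- The `star ⊗ star` map on `H ⊗ H` (as an additive map). -/
noncomputable def starTensor : H ⊗[k] H →+ H ⊗[k] H :=
  TensorProduct.liftAddHom
    { toFun := fun x =>
        { toFun := fun y => star x ⊗ₜ[k] star y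
          map_zero' := by simp
          map_add' := fun y₁ y₂ => by simp [star_add, TensorProduct.tmul_add] }
      map_zero' := by ext y; simp
      map_add' := fun x₁ x₂ => by ext y; simp [star_add, TensorProduct.add_tmul] }
    (fun r x y => by
      simp only [AddMonoidHom.coe_mk, ZeroHom.coe_mk, star_smul]
      rw [TensorProduct.smul_tmul])

/-- `H` is a Hopf `*`-algebra: `Δ(h*) = h₍₁₎* ⊗ h₍₂₎*`, `ε(h*) = ε(h)*`, and
`S ∘ * ∘ S ∘ * = id`. -/
def IsHopfStar (k H : Type*) [CommRing k] [StarRing k]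
    [Ring H] [HopfAlgebra k H] [StarRing H] [StarModule k H] : Prop :=
  (∀ h : H, Coalgebra.comul (R := k) (star h) = starTensor (Coalgebra.comul (R := k) h)) ∧
  (∀ h : H, Coalgebra.counit (R := k) (star h) = star (Coalgebra.counit (R := k) h)) ∧
  (∀ h : H, HopfAlgebra.antipode (R := k) (star (HopfAlgebra.antipode (R := k) (star h))) = h)

end ConvolutionFramework

section ModuleAlgebra

/-- A right `H`-module `*`-algebra `B`: a right action `act` of `H` on `B` such that the
multiplication and unit of `B` are `H`-linear in the Hopf sense and the action is
compatible with the `*`-structures. -/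
structure RightHopfModuleStarAlgebra (k H B : Type*) [CommRing k] [StarRing k]
    [Ring H] [HopfAlgebra k H] [StarRing H] [StarModule k H]
    [Ring B] [Algebra k B] [StarRing B] [StarModule k B] where
  act : B →ₗ[k] H →ₗ[k] B
  act_one : ∀ b : B, act b 1 = b
  act_mul : ∀ (b : B) (h h' : H), act b (h * h') = act (act b h) h'
  act_algebra_mul : ∀ b₁ b₂ : B,
    act (b₁ * b₂) = LinearMap.mul' k B ∘ₗ TensorProduct.map (act b₁) (act b₂) ∘ₗ Coalgebra.comul
  act_algebra_one : act 1 = Algebra.linearMap k B ∘ₗ Coalgebra.counit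
  act_star : ∀ (b : B) (h : H),
    star (act b h) = act (star b) (star (HopfAlgebra.antipode (R := k) h))

/-- A right `H`-equivariant `B`-`*`-bimodule `M`: commuting left and right `B`-actions,
a right `H`-action, the `*`-structure compatibilities, and Hopf-equivariance of the
`B`-actions. -/
structure EquivStarBimodule (k H B M : Type*) [CommRing k] [StarRing k]
    [Ring H] [HopfAlgebra k H] [StarRing H] [StarModule k H]
    [Ring B] [Algebra k B] [StarRing B] [StarModule k B]
    [AddCommGroup M] [Module k M] [StarAddMonoid M] [StarModule k M]
    (ρ : RightHopfModuleStarAlgebra k H B) where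
  lact : B →ₗ[k] M →ₗ[k] M
  ract : M →ₗ[k] B →ₗ[k] M
  hact : M →ₗ[k] H →ₗ[k] M
  lact_one : ∀ m : M, lact 1 m = m
  lact_mul : ∀ (b₁ b₂ : B) (m : M), lact (b₁ * b₂) m = lact b₁ (lact b₂ m)
  ract_one : ∀ m : M, ract m 1 = m
  ract_mul : ∀ (m : M) (b₁ b₂ : B), ract m (b₁ * b₂) = ract (ract m b₁) b₂
  middle : ∀ (b₁ : B) (m : M) (b₂ : B), ract (lact b₁ m) b₂ = lact b₁ (ract m b₂)
  star_compat : ∀ (b₁ : B) (m : M) (b₂ : B),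
    star (lact b₁ (ract m b₂)) = lact (star b₂) (ract (star m) (star b₁))
  hact_one : ∀ m : M, hact m 1 = m
  hact_mul : ∀ (m : M) (h h' : H), hact m (h * h') = hact (hact m h) h'
  hact_lact : ∀ (b : B) (m : M), hact (lact b m) =
    TensorProduct.lift lact ∘ₗ TensorProduct.map (ρ.act b) (hact m) ∘ₗ Coalgebra.comul
  hact_ract : ∀ (m : M) (b : B), hact (ract m b) =
    TensorProduct.lift ract ∘ₗ TensorProduct.map (hact m) (ρ.act b) ∘ₗ Coalgebra.comul
  hact_star : ∀ (m : M) (h : H),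
    star (hact m h) = hact (star m) (star (HopfAlgebra.antipode (R := k) h))

variable {k H B M : Type*} [CommRing k] [StarRing k]
  [Ring H] [HopfAlgebra k H] [StarRing H] [StarModule k H]
  [Ring B] [Algebra k B] [StarRing B] [StarModule k B]
  [AddCommGroup M] [Module k M] [StarAddMonoid M] [StarModule k M]
  {ρ : RightHopfModuleStarAlgebra k H B}

/-- The left convolution action of `C(H,B)` on `C(H,M)`: `(f ⋆ μ)(h) = f(h₍₁₎) • μ(h₍₂₎)`. -/
noncomputable def convL (S : EquivStarBimodule k H B M ρ)
    (f : H →ₗ[k] B) (μ : H →ₗ[k] M) : H →ₗ[k] M :=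
  TensorProduct.lift S.lact ∘ₗ TensorProduct.map f μ ∘ₗ Coalgebra.comul

/-- The right convolution action of `C(H,B)` on `C(H,M)`: `(μ ⋆ f)(h) = μ(h₍₁₎) • f(h₍₂₎)`. -/
noncomputable def convR (S : EquivStarBimodule k H B M ρ)
    (μ : H →ₗ[k] M) (f : H →ₗ[k] B) : H →ₗ[k] M :=
  TensorProduct.lift S.ract ∘ₗ TensorProduct.map μ f ∘ₗ Coalgebra.comul

/-- A lazy Sweedler 1-cocycle: a unitary `σ` of `C(H,B)` centralizing
`ρ_B(B) ⊕ ρ_M(M)`, with `σ(1) = 1` and `σ(hk) = (σ(h) ◁ k₍₁₎) σ(k₍₂₎)`. -/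
noncomputable def IsLazySweedlerCocycle (S : EquivStarBimodule k H B M ρ)
    (σ : H →ₗ[k] B) : Prop :=
  conv σ (convStar σ) = convOne ∧
  conv (convStar σ) σ = convOne ∧
  (∀ b : B, conv σ (ρ.act b) = conv (ρ.act b) σ) ∧
  (∀ m : M, convL S σ (S.hact m) = convR S (S.hact m) σ) ∧
  σ 1 = 1 ∧
  (∀ h : H, σ ∘ₗ LinearMap.mulLeft k h =
    LinearMap.mul' k B ∘ₗ TensorProduct.map (ρ.act (σ h)) σ ∘ₗ Coalgebra.comul)

/-- A lazy Hochschild 1-cocycle: a self-adjoint `μ ∈ C(H,M)` centralizing `ρ_B(B)`,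
with `μ(1) = 0` and `μ(hk) = μ(h) ◁ k + ε(h) μ(k)`. -/
noncomputable def IsLazyHochschildCocycle (S : EquivStarBimodule k H B M ρ)
    (μ : H →ₗ[k] M) : Prop :=
  convStar μ = μ ∧
  (∀ b : B, convL S (ρ.act b) μ = convR S μ (ρ.act b)) ∧
  μ 1 = 0 ∧
  (∀ h : H, μ ∘ₗ LinearMap.mulLeft k h = S.hact (μ h) + Coalgebra.counit (R := k) h • μ)

/-- `υ` is a unitary of `Cent_B(B ⊕ M)`: a unitary of `B` commuting with all of `B` and
centralizing `M`. -/
def IsCentralUnitary (S : EquivStarBimodule k H B M ρ) (υ : B) : Prop :=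
  υ * star υ = 1 ∧ star υ * υ = 1 ∧ (∀ b : B, υ * b = b * υ) ∧ ∀ m : M, S.lact υ m = S.ract m υ

/-- The Sweedler coboundary `Dυ(h) := (υ ◁ h) υ*`. -/
noncomputable def sweedlerCobound (ρ : RightHopfModuleStarAlgebra k H B) (υ : B) :
    H →ₗ[k] B :=
  LinearMap.mulRight k (star υ) ∘ₗ ρ.act υ

/-- The Hochschild coboundary `Dm(h) := m ◁ h - ε(h) m`. -/
noncomputable def hochCobound (S : EquivStarBimodule k H B M ρ) (m : M) : H →ₗ[k] M :=
  S.hact m - LinearMap.smulRight (Coalgebra.counit (R := k)) m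

/-- An `H`-equivariant `*`-derivation `der : B → M`. -/
def IsEquivStarDerivation (S : EquivStarBimodule k H B M ρ) (der : B →ₗ[k] M) : Prop :=
  (∀ b₁ b₂ : B, der (b₁ * b₂) = S.ract (der b₁) b₂ + S.lact b₁ (der b₂)) ∧
  (∀ b : B, der (star b) = - star (der b)) ∧
  (∀ (b : B) (h : H), der (ρ.act b h) = S.hact (der b) h)

/-- The Maurer–Cartan cocycle `MC[der](σ)(h) := -derσ(h₍₁₎) • σ*(h₍₂₎)`. -/
noncomputable def mcCocycle (S : EquivStarBimodule k H B M ρ) (der : B →ₗ[k] M)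
    (σ : H →ₗ[k] B) : H →ₗ[k] M :=
  - (TensorProduct.lift S.ract ∘ₗ TensorProduct.map (der ∘ₗ σ) (convStar σ) ∘ₗ Coalgebra.comul)

end ModuleAlgebra

section Stmt14Aux

open Coalgebra HopfAlgebra

attribute [local instance 100] LieRing.ofAssociativeRing

variable {𝔤 H B M : Type*} [LieRing 𝔤] [LieAlgebra ℝ 𝔤]
  [Ring H] [HopfAlgebra ℝ H] [StarRing H] [StarModule ℝ H]
  [Ring B] [Algebra ℝ B] [StarRing B] [StarModule ℝ B]
  [AddCommGroup M] [Module ℝ M] [StarAddMonoid M] [StarModule ℝ M]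
  {ρ : RightHopfModuleStarAlgebra ℝ H B}

private theorem tmap_zero_right {R A A' C C' : Type*} [CommSemiring R]
    [AddCommMonoid A] [AddCommMonoid A'] [AddCommMonoid C] [AddCommMonoid C']
    [Module R A] [Module R A'] [Module R C] [Module R C'] (f : A →ₗ[R] A') :
    TensorProduct.map f (0 : C →ₗ[R] C') = 0 :=
  TensorProduct.ext' fun m n => by simp

private theorem tmap_zero_left {R A A' C C' : Type*} [CommSemiring R]
    [AddCommMonoid A] [AddCommMonoid A'] [AddCommMonoid C] [AddCommMonoid C']
    [Module R A] [Module R A'] [Module R C] [Module R C'] (g : C →ₗ[R] C') :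
    TensorProduct.map (0 : A →ₗ[R] A') g = 0 :=
  TensorProduct.ext' fun m n => by simp

/-- Induction principle for `H ≃ U(𝔤)`. -/
theorem uea_induction (φ : UniversalEnvelopingAlgebra ℝ 𝔤 ≃ₐ[ℝ] H) (ι : 𝔤 →ₗ[ℝ] H)
    (hι : ∀ X : 𝔤, ι X = φ (UniversalEnvelopingAlgebra.ι ℝ X))
    {p : H → Prop}
    (halg : ∀ r : ℝ, p (algebraMap ℝ H r))
    (hgen : ∀ X : 𝔤, p (ι X))
    (hadd : ∀ a b, p a → p b → p (a + b))
    (hmul : ∀ a b, p a → p b → p (a * b)) (h : H) : p h := by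
  obtain ⟨u, rfl⟩ := φ.surjective h
  obtain ⟨t, rfl⟩ : ∃ t, UniversalEnvelopingAlgebra.mkAlgHom ℝ 𝔤 t = u :=
    RingCon.mkₐ_surjective _ u
  suffices hs : ∀ t, p ((φ.toAlgHom.comp
      (UniversalEnvelopingAlgebra.mkAlgHom ℝ 𝔤)) t) from hs t
  intro t
  induction t using TensorAlgebra.induction with
  | algebraMap r =>
      rw [AlgHom.commutes]; exact halg r
  | ι x =>
      have e : (φ.toAlgHom.comp (UniversalEnvelopingAlgebra.mkAlgHom ℝ 𝔤))
          (TensorAlgebra.ι ℝ x) = ι x := by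
        rw [hι]
        simp only [AlgHom.comp_apply, AlgEquiv.toAlgHom_eq_coe, AlgHom.coe_coe]
        rfl
      rw [e]; exact hgen x
  | mul a b ha hb => rw [map_mul]; exact hmul _ _ ha hb
  | add a b ha hb => rw [map_add]; exact hadd _ _ ha hb

theorem iota_bracket (φ : UniversalEnvelopingAlgebra ℝ 𝔤 ≃ₐ[ℝ] H) (ι : 𝔤 →ₗ[ℝ] H)
    (hι : ∀ X : 𝔤, ι X = φ (UniversalEnvelopingAlgebra.ι ℝ X)) (X Y : 𝔤) :
    ι ⁅X, Y⁆ = ι X * ι Y - ι Y * ι X := by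
  rw [hι, hι, hι, LieHom.map_lie, Ring.lie_def, map_sub, map_mul, map_mul]

/-- Two "derivation-type" cocycles agreeing on `1` and on `𝔤` agree. -/
theorem deriv_ext (φ : UniversalEnvelopingAlgebra ℝ 𝔤 ≃ₐ[ℝ] H) (ι : 𝔤 →ₗ[ℝ] H)
    (hι : ∀ X : 𝔤, ι X = φ (UniversalEnvelopingAlgebra.ι ℝ X))
    {S : EquivStarBimodule ℝ H B M ρ} {μ ν : H →ₗ[ℝ] M}
    (hμ : ∀ h : H, μ ∘ₗ LinearMap.mulLeft ℝ h
      = S.hact (μ h) + Coalgebra.counit (R := ℝ) h • μ)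
    (hν : ∀ h : H, ν ∘ₗ LinearMap.mulLeft ℝ h
      = S.hact (ν h) + Coalgebra.counit (R := ℝ) h • ν)
    (h1 : μ 1 = ν 1) (hgen : ∀ X, μ (ι X) = ν (ι X)) : μ = ν := by
  ext h
  refine uea_induction φ ι hι (p := fun h => μ h = ν h) ?_ hgen ?_ ?_ h
  · intro r
    rw [Algebra.algebraMap_eq_smul_one, map_smul, map_smul, h1]
  · intro a b ha hb; rw [map_add, map_add, ha, hb]
  · intro a b ha hb
    have ea := LinearMap.congr_fun (hμ a) b
    have eb := LinearMap.congr_fun (hν a) b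
    simp only [LinearMap.comp_apply, LinearMap.mulLeft_apply, LinearMap.add_apply,
      LinearMap.smul_apply] at ea eb
    rw [ea, eb, ha, hb]

/-- Right convolution-unit law. -/
theorem convUnitR (f : H →ₗ[ℝ] H) :
    LinearMap.mul' ℝ H ∘ₗ TensorProduct.map f
        (Algebra.linearMap ℝ H ∘ₗ Coalgebra.counit (R := ℝ)) ∘ₗ Coalgebra.comul = f := by
  ext a
  have repr := Coalgebra.Repr.arbitrary ℝ a
  have hsum : ∑ i ∈ repr.index, Coalgebra.counit (R := ℝ) (repr.right i) • repr.left i = a := by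
    have h2 : (TensorProduct.rid ℝ H).toLinearMap
          (∑ i ∈ repr.index, repr.left i ⊗ₜ[ℝ] Coalgebra.counit (R := ℝ) (repr.right i))
        = (TensorProduct.rid ℝ H).toLinearMap (a ⊗ₜ[ℝ] 1) := by
      rw [Coalgebra.sum_tmul_counit_eq]
    simpa [map_sum, -Coalgebra.sum_tmul_counit_eq, LinearEquiv.coe_coe] using h2
  simp only [LinearMap.comp_apply, ← repr.eq, map_sum]
  calc ∑ i ∈ repr.index, LinearMap.mul' ℝ H
        (TensorProduct.map f (Algebra.linearMap ℝ H ∘ₗ Coalgebra.counit (R := ℝ))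
          (repr.left i ⊗ₜ[ℝ] repr.right i))
      = ∑ i ∈ repr.index, Coalgebra.counit (R := ℝ) (repr.right i) • f (repr.left i) := by
        refine Finset.sum_congr rfl fun i _ => ?_
        simp only [TensorProduct.map_tmul, LinearMap.mul'_apply, LinearMap.comp_apply,
          Algebra.linearMap_apply]
        rw [← Algebra.commutes, ← Algebra.smul_def]
    _ = f a := by
        conv_rhs => rw [← hsum]
        rw [map_sum]
        exact Finset.sum_congr rfl fun i _ => (f.map_smul _ _).symm

/-- Left convolution-unit law. -/
theorem convUnitL (f : H →ₗ[ℝ] H) :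
    LinearMap.mul' ℝ H ∘ₗ TensorProduct.map
        (Algebra.linearMap ℝ H ∘ₗ Coalgebra.counit (R := ℝ)) f ∘ₗ Coalgebra.comul = f := by
  ext a
  have repr := Coalgebra.Repr.arbitrary ℝ a
  have hsum : ∑ i ∈ repr.index, Coalgebra.counit (R := ℝ) (repr.left i) • repr.right i = a := by
    have h2 : (TensorProduct.lid ℝ H).toLinearMap
          (∑ i ∈ repr.index, Coalgebra.counit (R := ℝ) (repr.left i) ⊗ₜ[ℝ] repr.right i)
        = (TensorProduct.lid ℝ H).toLinearMap ((1 : ℝ) ⊗ₜ[ℝ] a) := by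
      rw [Coalgebra.sum_counit_tmul_eq]
    simpa [map_sum, -Coalgebra.sum_counit_tmul_eq, LinearEquiv.coe_coe] using h2
  simp only [LinearMap.comp_apply, ← repr.eq, map_sum]
  calc ∑ i ∈ repr.index, LinearMap.mul' ℝ H
        (TensorProduct.map (Algebra.linearMap ℝ H ∘ₗ Coalgebra.counit (R := ℝ)) f
          (repr.left i ⊗ₜ[ℝ] repr.right i))
      = ∑ i ∈ repr.index, Coalgebra.counit (R := ℝ) (repr.left i) • f (repr.right i) := by
        refine Finset.sum_congr rfl fun i _ => ?_
        simp only [TensorProduct.map_tmul, LinearMap.mul'_apply, LinearMap.comp_apply,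
          Algebra.linearMap_apply]
        rw [← Algebra.smul_def]
    _ = f a := by
        conv_rhs => rw [← hsum]
        rw [map_sum]
        exact Finset.sum_congr rfl fun i _ => (f.map_smul _ _).symm

section Antipode

variable (φ : UniversalEnvelopingAlgebra ℝ 𝔤 ≃ₐ[ℝ] H) (ι : 𝔤 →ₗ[ℝ] H)

/-- The Lie algebra map `X ↦ op (-ι X)`. -/
noncomputable def negOpLie (hι : ∀ X : 𝔤, ι X = φ (UniversalEnvelopingAlgebra.ι ℝ X)) :
    𝔤 →ₗ⁅ℝ⁆ Hᵐᵒᵖ where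
  toFun X := MulOpposite.op (- ι X)
  map_add' X Y := by simp [map_add, neg_add]; abel
  map_smul' r X := by simp
  map_lie' := by
    intro X Y
    show MulOpposite.op (- ι ⁅X, Y⁆) = ⁅MulOpposite.op (- ι X), MulOpposite.op (- ι Y)⁆
    rw [iota_bracket φ ι hι, Ring.lie_def]
    simp only [← MulOpposite.op_mul, ← MulOpposite.op_sub, neg_mul, mul_neg, neg_neg]
    congr 1
    abel

/-- The candidate antipode, an anti-homomorphism by construction. -/
noncomputable def antiHom (hι : ∀ X : 𝔤, ι X = φ (UniversalEnvelopingAlgebra.ι ℝ X)) :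
    H →ₗ[ℝ] H :=
  (MulOpposite.opLinearEquiv ℝ).symm.toLinearMap ∘ₗ
    ((UniversalEnvelopingAlgebra.lift ℝ (negOpLie φ ι hι)).comp φ.symm.toAlgHom).toLinearMap

variable (hι : ∀ X : 𝔤, ι X = φ (UniversalEnvelopingAlgebra.ι ℝ X))

include hι

theorem antiHom_apply (h : H) :
    antiHom φ ι hι h
      = MulOpposite.unop (UniversalEnvelopingAlgebra.lift ℝ (negOpLie φ ι hι) (φ.symm h)) :=
  rfl

theorem antiHom_one : antiHom φ ι hι 1 = 1 := by
  rw [antiHom_apply, map_one, map_one]; rfl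

theorem antiHom_mul (a b : H) :
    antiHom φ ι hι (a * b) = antiHom φ ι hι b * antiHom φ ι hι a := by
  simp only [antiHom_apply, map_mul]
  rfl

theorem antiHom_iota (X : 𝔤) : antiHom φ ι hι (ι X) = - ι X := by
  rw [antiHom_apply]
  have : φ.symm (ι X) = UniversalEnvelopingAlgebra.ι ℝ X := by
    rw [hι, AlgEquiv.symm_apply_apply]
  rw [this, UniversalEnvelopingAlgebra.lift_ι_apply]
  rfl

/-- `antiHom` is a left convolution inverse of the identity. -/
theorem antiHom_conv
    (hprim : ∀ X : 𝔤, Coalgebra.comul (R := ℝ) (ι X) = ι X ⊗ₜ[ℝ] 1 + 1 ⊗ₜ[ℝ] ι X)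
    (hcounit : ∀ X : 𝔤, Coalgebra.counit (R := ℝ) (ι X) = 0) (h : H) :
    LinearMap.mul' ℝ H (TensorProduct.map (antiHom φ ι hι) LinearMap.id
        (Coalgebra.comul (R := ℝ) h))
      = algebraMap ℝ H (Coalgebra.counit (R := ℝ) h) := by
  have aux1 : ∀ x y : H, LinearMap.mul' ℝ H ∘ₗ TensorProduct.map (antiHom φ ι hι)
        LinearMap.id ∘ₗ LinearMap.mulLeft ℝ (x ⊗ₜ[ℝ] y)
      = LinearMap.mul' ℝ H ∘ₗ TensorProduct.map (antiHom φ ι hι)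
          (LinearMap.mulLeft ℝ (antiHom φ ι hι x * y)) := by
    intro x y
    refine TensorProduct.ext' fun z w => ?_
    simp only [LinearMap.comp_apply, LinearMap.mulLeft_apply,
      Algebra.TensorProduct.tmul_mul_tmul, TensorProduct.map_tmul, LinearMap.mul'_apply,
      LinearMap.id_coe, id_eq]
    rw [antiHom_mul φ ι hι, mul_assoc, mul_assoc]
  have claimC : ∀ (k : H) (t : H ⊗[ℝ] H),
      LinearMap.mul' ℝ H (TensorProduct.map (antiHom φ ι hι) LinearMap.id
          (t * Coalgebra.comul (R := ℝ) k))
        = LinearMap.mul' ℝ H (TensorProduct.map (antiHom φ ι hι)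
            (LinearMap.mulLeft ℝ (LinearMap.mul' ℝ H
              (TensorProduct.map (antiHom φ ι hι) LinearMap.id t)))
            (Coalgebra.comul (R := ℝ) k)) := by
    intro k t
    induction t using TensorProduct.induction_on with
    | zero =>
        have e0 : LinearMap.mulLeft ℝ (0 : H) = 0 := by ext w; simp
        simp only [zero_mul, map_zero, e0, tmap_zero_right, LinearMap.zero_apply]
    | tmul x y =>
        have h1 := LinearMap.congr_fun (aux1 x y) (Coalgebra.comul (R := ℝ) k)
        simp only [LinearMap.comp_apply, LinearMap.mulLeft_apply] at h1
        rw [h1]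
        have e1 : LinearMap.mul' ℝ H (TensorProduct.map (antiHom φ ι hι) LinearMap.id
            (x ⊗ₜ[ℝ] y)) = antiHom φ ι hι x * y := by simp
        rw [e1]
    | add t1 t2 h1 h2 =>
        rw [add_mul, map_add, map_add, h1, h2, map_add, map_add]
        have e : LinearMap.mulLeft ℝ
            (LinearMap.mul' ℝ H (TensorProduct.map (antiHom φ ι hι) LinearMap.id t1)
              + LinearMap.mul' ℝ H (TensorProduct.map (antiHom φ ι hι) LinearMap.id t2))
            = LinearMap.mulLeft ℝ (LinearMap.mul' ℝ H
                (TensorProduct.map (antiHom φ ι hι) LinearMap.id t1))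
              + LinearMap.mulLeft ℝ (LinearMap.mul' ℝ H
                (TensorProduct.map (antiHom φ ι hι) LinearMap.id t2)) := by
          ext w; simp [add_mul]
        rw [e, TensorProduct.map_add_right, LinearMap.add_apply, map_add]
  refine uea_induction φ ι hι (p := fun h => LinearMap.mul' ℝ H
      (TensorProduct.map (antiHom φ ι hι) LinearMap.id (Coalgebra.comul (R := ℝ) h))
      = algebraMap ℝ H (Coalgebra.counit (R := ℝ) h)) ?_ ?_ ?_ ?_ h
  · intro r
    simp [Bialgebra.comul_algebraMap, Algebra.TensorProduct.algebraMap_apply,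
      Algebra.algebraMap_eq_smul_one, map_smul, antiHom_one φ ι hι,
      Algebra.TensorProduct.one_def]
  · intro X
    simp [hprim, antiHom_iota φ ι hι, antiHom_one φ ι hι, hcounit]
  · intro a b ha hb
    simp only [map_add, ha, hb]
  · intro a b ha hb
    rw [Bialgebra.comul_mul, claimC b (Coalgebra.comul (R := ℝ) a), ha]
    have e : LinearMap.mulLeft ℝ (algebraMap ℝ H (Coalgebra.counit (R := ℝ) a))
        = (Coalgebra.counit (R := ℝ) a) • (LinearMap.id : H →ₗ[ℝ] H) := by
      ext w; simp [Algebra.smul_def]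
    rw [e, TensorProduct.map_smul_right, LinearMap.smul_apply, map_smul, hb,
      Bialgebra.counit_mul, map_mul, ← Algebra.smul_def]


theorem antipode_eq
    (hprim : ∀ X : 𝔤, Coalgebra.comul (R := ℝ) (ι X) = ι X ⊗ₜ[ℝ] 1 + 1 ⊗ₜ[ℝ] ι X)
    (hcounit : ∀ X : 𝔤, Coalgebra.counit (R := ℝ) (ι X) = 0) :
    HopfAlgebra.antipode (R := ℝ) (A := H) = antiHom φ ι hι := by
  have key1 : LinearMap.mul' ℝ H ∘ₗ TensorProduct.map (antiHom φ ι hι)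
        LinearMap.id ∘ₗ Coalgebra.comul
      = Algebra.linearMap ℝ H ∘ₗ Coalgebra.counit (R := ℝ) := by
    refine LinearMap.ext fun a => ?_
    simp only [LinearMap.comp_apply]
    exact antiHom_conv φ ι hι hprim hcounit a
  have key2 : LinearMap.mul' ℝ H ∘ₗ TensorProduct.map (LinearMap.id (M := H))
        (HopfAlgebra.antipode (R := ℝ)) ∘ₗ Coalgebra.comul
      = Algebra.linearMap ℝ H ∘ₗ Coalgebra.counit (R := ℝ) :=
    HopfAlgebra.mul_antipode_lTensor_comul
  set Sa := HopfAlgebra.antipode (R := ℝ) (A := H) with hSa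
  set T' := antiHom φ ι hι with hT'
  set X : H ⊗[ℝ] H →ₗ[ℝ] H :=
    LinearMap.mul' ℝ H ∘ₗ TensorProduct.map LinearMap.id Sa with hX
  set Ψ : H ⊗[ℝ] (H ⊗[ℝ] H) →ₗ[ℝ] H :=
    LinearMap.mul' ℝ H ∘ₗ TensorProduct.map T' X with hΨ
  have eX : X ∘ₗ Coalgebra.comul = Algebra.linearMap ℝ H ∘ₗ Coalgebra.counit (R := ℝ) := by
    rw [hX, LinearMap.comp_assoc]
    exact key2
  have eY : (LinearMap.mul' ℝ H ∘ₗ TensorProduct.map T' LinearMap.id) ∘ₗ Coalgebra.comul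
      = Algebra.linearMap ℝ H ∘ₗ Coalgebra.counit (R := ℝ) := by
    rw [LinearMap.comp_assoc]
    exact key1
  have P1 : ∀ a : H, Ψ (LinearMap.lTensor H (Coalgebra.comul (R := ℝ)) (Coalgebra.comul a))
      = T' a := by
    intro a
    have e1 : TensorProduct.map T' X ∘ₗ LinearMap.lTensor H (Coalgebra.comul (R := ℝ))
        = TensorProduct.map T' (X ∘ₗ Coalgebra.comul) := by
      rw [show LinearMap.lTensor H (Coalgebra.comul (R := ℝ))
          = TensorProduct.map LinearMap.id (Coalgebra.comul (R := ℝ)) from rfl,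
        ← TensorProduct.map_comp, LinearMap.comp_id]
    have h1 := LinearMap.congr_fun e1 (Coalgebra.comul (R := ℝ) a)
    simp only [LinearMap.comp_apply] at h1
    rw [hΨ, LinearMap.comp_apply, h1, eX]
    exact LinearMap.congr_fun (convUnitR T') a
  have e2 : Ψ ∘ₗ (TensorProduct.assoc ℝ H H H).toLinearMap
      = LinearMap.mul' ℝ H ∘ₗ TensorProduct.map
          (LinearMap.mul' ℝ H ∘ₗ TensorProduct.map T' LinearMap.id) Sa := by
    refine TensorProduct.ext_threefold fun x y z => ?_
    simp [hΨ, hX, mul_assoc]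
  have P2 : ∀ a : H, Ψ ((TensorProduct.assoc ℝ H H H)
      (LinearMap.rTensor H (Coalgebra.comul (R := ℝ)) (Coalgebra.comul a))) = Sa a := by
    intro a
    have h2 := LinearMap.congr_fun e2
      (LinearMap.rTensor H (Coalgebra.comul (R := ℝ)) (Coalgebra.comul a))
    simp only [LinearMap.comp_apply, LinearEquiv.coe_coe] at h2
    rw [h2]
    have e3 : TensorProduct.map (LinearMap.mul' ℝ H ∘ₗ TensorProduct.map T' LinearMap.id) Sa ∘ₗ
        LinearMap.rTensor H (Coalgebra.comul (R := ℝ))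
        = TensorProduct.map ((LinearMap.mul' ℝ H ∘ₗ TensorProduct.map T' LinearMap.id)
            ∘ₗ Coalgebra.comul) Sa := by
      rw [show LinearMap.rTensor H (Coalgebra.comul (R := ℝ))
          = TensorProduct.map (Coalgebra.comul (R := ℝ)) LinearMap.id from rfl,
        ← TensorProduct.map_comp, LinearMap.comp_id]
    have h3 := LinearMap.congr_fun e3 (Coalgebra.comul (R := ℝ) a)
    simp only [LinearMap.comp_apply] at h3
    rw [h3, eY]
    exact LinearMap.congr_fun (convUnitL Sa) a
  refine LinearMap.ext fun a => ?_
  rw [← P2 a, Coalgebra.coassoc_apply, P1 a]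

theorem antipode_mul_rev
    (hprim : ∀ X : 𝔤, Coalgebra.comul (R := ℝ) (ι X) = ι X ⊗ₜ[ℝ] 1 + 1 ⊗ₜ[ℝ] ι X)
    (hcounit : ∀ X : 𝔤, Coalgebra.counit (R := ℝ) (ι X) = 0) (a b : H) :
    HopfAlgebra.antipode (R := ℝ) (a * b)
      = HopfAlgebra.antipode (R := ℝ) b * HopfAlgebra.antipode (R := ℝ) (A := H) a := by
  rw [antipode_eq φ ι hι hprim hcounit]; exact antiHom_mul φ ι hι a b

theorem antipode_one'
    (hprim : ∀ X : 𝔤, Coalgebra.comul (R := ℝ) (ι X) = ι X ⊗ₜ[ℝ] 1 + 1 ⊗ₜ[ℝ] ι X)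
    (hcounit : ∀ X : 𝔤, Coalgebra.counit (R := ℝ) (ι X) = 0) :
    HopfAlgebra.antipode (R := ℝ) (A := H) 1 = 1 := by
  rw [antipode_eq φ ι hι hprim hcounit]; exact antiHom_one φ ι hι

theorem counit_antipode
    (hprim : ∀ X : 𝔤, Coalgebra.comul (R := ℝ) (ι X) = ι X ⊗ₜ[ℝ] 1 + 1 ⊗ₜ[ℝ] ι X)
    (hcounit : ∀ X : 𝔤, Coalgebra.counit (R := ℝ) (ι X) = 0)
    (hantipode : ∀ X : 𝔤, HopfAlgebra.antipode (R := ℝ) (ι X) = - ι X) (h : H) :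
    Coalgebra.counit (R := ℝ) (HopfAlgebra.antipode (R := ℝ) h)
      = Coalgebra.counit (R := ℝ) h := by
  refine uea_induction φ ι hι (p := fun h =>
    Coalgebra.counit (R := ℝ) (HopfAlgebra.antipode (R := ℝ) h)
      = Coalgebra.counit (R := ℝ) h) ?_ ?_ ?_ ?_ h
  · intro r
    show Coalgebra.counit (R := ℝ) (HopfAlgebra.antipode (R := ℝ) (algebraMap ℝ H r)) = _
    simp [Algebra.algebraMap_eq_smul_one, antipode_one' φ ι hι hprim hcounit]
  · intro X
    show Coalgebra.counit (R := ℝ) (HopfAlgebra.antipode (R := ℝ) (ι X)) = _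
    rw [hantipode, map_neg, hcounit, neg_zero]
  · intro a b ha hb
    show Coalgebra.counit (R := ℝ) (HopfAlgebra.antipode (R := ℝ) (a + b)) = _
    rw [map_add, map_add, map_add, ha, hb]
  · intro a b ha hb
    show Coalgebra.counit (R := ℝ) (HopfAlgebra.antipode (R := ℝ) (a * b)) = _
    rw [antipode_mul_rev φ ι hι hprim hcounit, Bialgebra.counit_mul, Bialgebra.counit_mul,
      ha, hb, mul_comm]

end Antipode

theorem star_of_deriv (φ : UniversalEnvelopingAlgebra ℝ 𝔤 ≃ₐ[ℝ] H) (ι : 𝔤 →ₗ[ℝ] H)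
    (hι : ∀ X : 𝔤, ι X = φ (UniversalEnvelopingAlgebra.ι ℝ X))
    (hH : IsHopfStar ℝ H)
    (hprim : ∀ X : 𝔤, Coalgebra.comul (R := ℝ) (ι X) = ι X ⊗ₜ[ℝ] 1 + 1 ⊗ₜ[ℝ] ι X)
    (hcounit : ∀ X : 𝔤, Coalgebra.counit (R := ℝ) (ι X) = 0)
    (hantipode : ∀ X : 𝔤, HopfAlgebra.antipode (R := ℝ) (ι X) = - ι X)
    (hstar : ∀ X : 𝔤, star (ι X) = - ι X)
    {S : EquivStarBimodule ℝ H B M ρ} {μ : H →ₗ[ℝ] M}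
    (hμ1 : μ 1 = 0)
    (hμ : ∀ h : H, μ ∘ₗ LinearMap.mulLeft ℝ h
      = S.hact (μ h) + Coalgebra.counit (R := ℝ) h • μ)
    (hgenstar : ∀ X, star (μ (ι X)) = μ (ι X)) :
    convStar μ = μ := by
  have hSmul := antipode_mul_rev φ ι hι hprim hcounit
  have hSctr := counit_antipode φ ι hι hprim hcounit hantipode
  have hS1 := antipode_one' φ ι hι hprim hcounit
  have cs_apply : ∀ g : H, convStar μ g
      = star (μ (star (HopfAlgebra.antipode (R := ℝ) g))) := fun g => rfl
  have hkk : ∀ k : H,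
      star (HopfAlgebra.antipode (R := ℝ) (star (HopfAlgebra.antipode (R := ℝ) k))) = k := by
    intro k
    have h3 := hH.2.2 (star k)
    rw [star_star] at h3
    rw [h3, star_star]
  have hεs : ∀ g : H, Coalgebra.counit (R := ℝ) (star (HopfAlgebra.antipode (R := ℝ) g))
      = Coalgebra.counit (R := ℝ) g := by
    intro g; rw [hH.2.1, star_trivial, hSctr]
  refine deriv_ext φ ι hι (S := S) ?_ hμ ?_ ?_
  · intro h
    ext k
    simp only [LinearMap.comp_apply, LinearMap.mulLeft_apply, LinearMap.add_apply,
      LinearMap.smul_apply]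
    calc convStar μ (h * k)
        = star (μ (star (HopfAlgebra.antipode (R := ℝ) k * HopfAlgebra.antipode (R := ℝ) h))) := by
          rw [cs_apply, hSmul h k]
      _ = star (μ (star (HopfAlgebra.antipode (R := ℝ) h)
            * star (HopfAlgebra.antipode (R := ℝ) k))) := by rw [star_mul]
      _ = star (S.hact (μ (star (HopfAlgebra.antipode (R := ℝ) h)))
              (star (HopfAlgebra.antipode (R := ℝ) k))
            + Coalgebra.counit (R := ℝ) (star (HopfAlgebra.antipode (R := ℝ) h))
              • μ (star (HopfAlgebra.antipode (R := ℝ) k))) := by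
          have hc := LinearMap.congr_fun (hμ (star (HopfAlgebra.antipode (R := ℝ) h)))
            (star (HopfAlgebra.antipode (R := ℝ) k))
          simp only [LinearMap.comp_apply, LinearMap.mulLeft_apply, LinearMap.add_apply,
            LinearMap.smul_apply] at hc
          rw [hc]
      _ = S.hact (convStar μ h) k + Coalgebra.counit (R := ℝ) h • convStar μ k := by
          rw [star_add, S.hact_star, hkk k, star_smul,
            star_trivial (Coalgebra.counit (R := ℝ) (star (HopfAlgebra.antipode (R := ℝ) h))),
            hεs h, ← cs_apply h, ← cs_apply k]
  · rw [cs_apply, hS1, star_one, hμ1, star_zero]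
  · intro X
    rw [cs_apply, hantipode, star_neg, hstar, neg_neg, hgenstar]

theorem centrality_of_deriv (φ : UniversalEnvelopingAlgebra ℝ 𝔤 ≃ₐ[ℝ] H) (ι : 𝔤 →ₗ[ℝ] H)
    (hι : ∀ X : 𝔤, ι X = φ (UniversalEnvelopingAlgebra.ι ℝ X))
    (hprim : ∀ X : 𝔤, Coalgebra.comul (R := ℝ) (ι X) = ι X ⊗ₜ[ℝ] 1 + 1 ⊗ₜ[ℝ] ι X)
    {S : EquivStarBimodule ℝ H B M ρ} {μ : H →ₗ[ℝ] M}
    (hμ1 : μ 1 = 0)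
    (hμ : ∀ h : H, μ ∘ₗ LinearMap.mulLeft ℝ h
      = S.hact (μ h) + Coalgebra.counit (R := ℝ) h • μ)
    (hgen : ∀ (X : 𝔤) (b : B), S.lact b (μ (ι X)) = S.ract (μ (ι X)) b) :
    ∀ b : B, convL S (ρ.act b) μ = convR S μ (ρ.act b) := by
  have hμ' : ∀ h k : H, μ (h * k)
      = S.hact (μ h) k + Coalgebra.counit (R := ℝ) h • μ k := by
    intro h k
    have h0 := LinearMap.congr_fun (hμ h) k
    simpa only [LinearMap.comp_apply, LinearMap.mulLeft_apply, LinearMap.add_apply,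
      LinearMap.smul_apply] using h0
  have A1 : ∀ (b : B) (x y : H) (u : H ⊗[ℝ] H),
      TensorProduct.lift S.lact (TensorProduct.map (ρ.act b) μ ((x ⊗ₜ[ℝ] y) * u))
        = TensorProduct.lift S.lact
            (TensorProduct.map (ρ.act (ρ.act b x)) (S.hact (μ y)) u)
          + Coalgebra.counit (R := ℝ) y
            • TensorProduct.lift S.lact (TensorProduct.map (ρ.act (ρ.act b x)) μ u) := by
    intro b x y u
    induction u using TensorProduct.induction_on with
    | zero => simp
    | tmul z w =>
        simp only [Algebra.TensorProduct.tmul_mul_tmul, TensorProduct.map_tmul,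
          TensorProduct.lift.tmul]
        rw [ρ.act_mul, hμ' y w, map_add, map_smul]
    | add u1 u2 h1 h2 =>
        simp only [mul_add, map_add, h1, h2, smul_add]
        abel
  have B1 : ∀ (b : B) (x y : H) (u : H ⊗[ℝ] H),
      TensorProduct.lift S.ract (TensorProduct.map μ (ρ.act b) ((x ⊗ₜ[ℝ] y) * u))
        = TensorProduct.lift S.ract
            (TensorProduct.map (S.hact (μ x)) (ρ.act (ρ.act b y)) u)
          + Coalgebra.counit (R := ℝ) x
            • TensorProduct.lift S.ract (TensorProduct.map μ (ρ.act (ρ.act b y)) u) := by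
    intro b x y u
    induction u using TensorProduct.induction_on with
    | zero => simp
    | tmul z w =>
        simp only [Algebra.TensorProduct.tmul_mul_tmul, TensorProduct.map_tmul,
          TensorProduct.lift.tmul]
        rw [ρ.act_mul, hμ' x z, map_add, LinearMap.add_apply, map_smul, LinearMap.smul_apply]
    | add u1 u2 h1 h2 =>
        simp only [mul_add, map_add, h1, h2, smul_add]
        abel
  set cR : H ⊗[ℝ] H →ₗ[ℝ] H :=
    (TensorProduct.rid ℝ H).toLinearMap ∘ₗ LinearMap.lTensor H (Coalgebra.counit (R := ℝ))
    with hcR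
  set cL : H ⊗[ℝ] H →ₗ[ℝ] H :=
    (TensorProduct.lid ℝ H).toLinearMap ∘ₗ LinearMap.rTensor H (Coalgebra.counit (R := ℝ))
    with hcL
  have cR_tmul : ∀ x y : H, cR (x ⊗ₜ[ℝ] y) = Coalgebra.counit (R := ℝ) y • x := by
    intro x y; simp [hcR]
  have cL_tmul : ∀ x y : H, cL (x ⊗ₜ[ℝ] y) = Coalgebra.counit (R := ℝ) x • y := by
    intro x y; simp [hcL]
  have cR_comul : ∀ a : H, cR (Coalgebra.comul a) = a := by
    intro a
    simp [hcR, Coalgebra.lTensor_counit_comul]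
  have cL_comul : ∀ a : H, cL (Coalgebra.comul a) = a := by
    intro a
    simp [hcL, Coalgebra.rTensor_counit_comul]
  have claimA : ∀ (b : B) (k : H) (t : H ⊗[ℝ] H),
      TensorProduct.lift S.lact (TensorProduct.map (ρ.act b) μ (t * Coalgebra.comul (R := ℝ) k))
        = S.hact (TensorProduct.lift S.lact (TensorProduct.map (ρ.act b) μ t)) k
          + TensorProduct.lift S.lact
              (TensorProduct.map (ρ.act (ρ.act b (cR t))) μ (Coalgebra.comul (R := ℝ) k)) := by
    intro b k t
    induction t using TensorProduct.induction_on with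
    | zero => simp [tmap_zero_left]
    | tmul x y =>
        rw [A1 b x y (Coalgebra.comul (R := ℝ) k)]
        congr 1
        · have e := LinearMap.congr_fun (S.hact_lact (ρ.act b x) (μ y)) k
          simp only [LinearMap.comp_apply] at e
          rw [← e]
          simp [TensorProduct.lift.tmul]
        · simp only [cR_tmul, map_smul, TensorProduct.map_smul_left, LinearMap.smul_apply]
    | add t1 t2 h1 h2 =>
        simp only [add_mul, map_add, h1, h2, LinearMap.add_apply,
          TensorProduct.map_add_left]
        abel
  have claimB : ∀ (b : B) (k : H) (t : H ⊗[ℝ] H),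
      TensorProduct.lift S.ract (TensorProduct.map μ (ρ.act b) (t * Coalgebra.comul (R := ℝ) k))
        = S.hact (TensorProduct.lift S.ract (TensorProduct.map μ (ρ.act b) t)) k
          + TensorProduct.lift S.ract
              (TensorProduct.map μ (ρ.act (ρ.act b (cL t))) (Coalgebra.comul (R := ℝ) k)) := by
    intro b k t
    induction t using TensorProduct.induction_on with
    | zero => simp [tmap_zero_right]
    | tmul x y =>
        rw [B1 b x y (Coalgebra.comul (R := ℝ) k)]
        congr 1
        · have e := LinearMap.congr_fun (S.hact_ract (μ x) (ρ.act b y)) k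
          simp only [LinearMap.comp_apply] at e
          rw [← e]
          simp [TensorProduct.lift.tmul]
        · simp only [cL_tmul, map_smul, TensorProduct.map_smul_right, LinearMap.smul_apply]
    | add t1 t2 h1 h2 =>
        simp only [add_mul, map_add, h1, h2, LinearMap.add_apply,
          TensorProduct.map_add_right]
        abel
  have main : ∀ h : H, ∀ b : B,
      TensorProduct.lift S.lact (TensorProduct.map (ρ.act b) μ (Coalgebra.comul (R := ℝ) h))
        = TensorProduct.lift S.ract (TensorProduct.map μ (ρ.act b) (Coalgebra.comul (R := ℝ) h)) := by
    intro h
    refine uea_induction φ ι hι (p := fun h => ∀ b : B,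
        TensorProduct.lift S.lact (TensorProduct.map (ρ.act b) μ (Coalgebra.comul (R := ℝ) h))
          = TensorProduct.lift S.ract
              (TensorProduct.map μ (ρ.act b) (Coalgebra.comul (R := ℝ) h))) ?_ ?_ ?_ ?_ h
    · intro r b
      rw [Bialgebra.comul_algebraMap, Algebra.TensorProduct.algebraMap_apply]
      simp [Algebra.algebraMap_eq_smul_one, hμ1, ρ.act_one]
    · intro X b
      rw [hprim]
      simp only [map_add, TensorProduct.map_tmul, TensorProduct.lift.tmul]
      rw [hμ1, ρ.act_one]
      simp [hgen X b]
    · intro a1 a2 h1 h2 b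
      simp only [map_add]
      rw [h1 b, h2 b]
    · intro a1 a2 h1 h2 b
      rw [Bialgebra.comul_mul, claimA b a2 (Coalgebra.comul (R := ℝ) a1),
        claimB b a2 (Coalgebra.comul (R := ℝ) a1), cR_comul a1, cL_comul a1,
        h1 b, h2 (ρ.act b a1)]
  intro b
  refine LinearMap.ext fun h => ?_
  simp only [convL, convR, LinearMap.comp_apply]
  exact main h b

/-- Partial application of a bilinear action (kept generic in the scalars). -/
abbrev hactAt {k H M : Type*} [CommRing k] [AddCommGroup H] [Module k H] [AddCommGroup M]
    [Module k M] (f : M →ₗ[k] H →ₗ[k] M) (m : M) : H →ₗ[k] M :=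
  f m

section Construction

variable (S : EquivStarBimodule ℝ H B M ρ) (ι : 𝔤 →ₗ[ℝ] H) (c : 𝔤 →ₗ[ℝ] M)
  (hbr : ∀ X Y : 𝔤, ι ⁅X, Y⁆ = ι X * ι Y - ι Y * ι X)
  (hco : ∀ X Y : 𝔤, hactAt S.hact (c X) (ι Y) - hactAt S.hact (c Y) (ι X) - c ⁅X, Y⁆ = 0)

/-- The representation of `𝔤` on `H × M` given by `X • (k, n) = (ι X * k, c X ◁ k)`. -/
noncomputable def lieRep : 𝔤 →ₗ⁅ℝ⁆ Module.End ℝ (H × M) where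
  toFun X := (LinearMap.mulLeft ℝ (ι X) ∘ₗ LinearMap.fst ℝ H M).prod
    (hactAt S.hact (c X) ∘ₗ LinearMap.fst ℝ H M)
  map_add' X Y := by
    apply LinearMap.ext; intro kn
    apply Prod.ext <;>
      simp [add_mul, map_add]
  map_smul' r X := by
    apply LinearMap.ext; intro kn
    apply Prod.ext <;>
      simp [smul_mul_assoc]
  map_lie' := by
    intro X Y
    apply LinearMap.ext; intro kn
    have hc : c ⁅X, Y⁆ = S.hact (c X) (ι Y) - S.hact (c Y) (ι X) := by
      have h0 := hco X Y
      rw [sub_eq_zero] at h0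
      exact h0.symm
    apply Prod.ext
    · show ι ⁅X, Y⁆ * kn.1 = _
      rw [hbr]
      simp [Ring.lie_def, Module.End.mul_apply, sub_mul, mul_assoc]
    · show S.hact (c ⁅X, Y⁆) kn.1 = _
      rw [hc]
      simp [Ring.lie_def, Module.End.mul_apply, S.hact_mul, map_sub]

variable (φ : UniversalEnvelopingAlgebra ℝ 𝔤 ≃ₐ[ℝ] H)
  (hι : ∀ X : 𝔤, ι X = φ (UniversalEnvelopingAlgebra.ι ℝ X))

/-- The algebra map `H → End (H × M)` extending `lieRep`. -/
noncomputable def hochExt : H →ₐ[ℝ] Module.End ℝ (H × M) :=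
  (UniversalEnvelopingAlgebra.lift ℝ (lieRep S ι c hbr hco)).comp φ.symm.toAlgHom

/-- The Hochschild cocycle extending `c`. -/
noncomputable def hochMu : H →ₗ[ℝ] M :=
  LinearMap.snd ℝ H M ∘ₗ LinearMap.applyₗ ((1 : H), (0 : M)) ∘ₗ
    (hochExt S ι c hbr hco φ).toLinearMap

theorem hochMu_apply (h : H) :
    hochMu S ι c hbr hco φ h = (hochExt S ι c hbr hco φ h ((1 : H), (0 : M))).2 := rfl

include hι

theorem hochExt_iota (X : 𝔤) :
    hochExt S ι c hbr hco φ (ι X) = lieRep S ι c hbr hco X := by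
  have : φ.symm (ι X) = UniversalEnvelopingAlgebra.ι ℝ X := by
    rw [hι, AlgEquiv.symm_apply_apply]
  show UniversalEnvelopingAlgebra.lift ℝ (lieRep S ι c hbr hco) (φ.symm (ι X)) = _
  rw [this, UniversalEnvelopingAlgebra.lift_ι_apply]

theorem hochMu_iota (X : 𝔤) : hochMu S ι c hbr hco φ (ι X) = c X := by
  rw [hochMu_apply, hochExt_iota S ι c hbr hco φ hι]
  show S.hact (c X) 1 = c X
  exact S.hact_one _

theorem hochMu_one : hochMu S ι c hbr hco φ 1 = 0 := by
  rw [hochMu_apply, map_one]; rfl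

theorem hochExt_apply
    (hcounit : ∀ X : 𝔤, Coalgebra.counit (R := ℝ) (ι X) = 0) (h : H) (k : H) (n : M) :
    hochExt S ι c hbr hco φ h (k, n)
      = (h * k, S.hact (hochMu S ι c hbr hco φ h) k + Coalgebra.counit (R := ℝ) h • n) := by
  revert k n
  refine uea_induction φ ι hι (p := fun h => ∀ (k : H) (n : M),
      hochExt S ι c hbr hco φ h (k, n)
        = (h * k, S.hact (hochMu S ι c hbr hco φ h) k
            + Coalgebra.counit (R := ℝ) h • n)) ?_ ?_ ?_ ?_ h
  · intro r k n
    have hmu0 : hochMu S ι c hbr hco φ (algebraMap ℝ H r) = 0 := by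
      rw [hochMu_apply, AlgHom.commutes, Module.algebraMap_end_apply]
      simp
    rw [AlgHom.commutes, Module.algebraMap_end_apply, hmu0]
    apply Prod.ext
    · show r • k = algebraMap ℝ H r * k
      rw [Algebra.smul_def]
    · show r • n = S.hact (0 : M) k + Coalgebra.counit (R := ℝ) (algebraMap ℝ H r) • n
      simp
  · intro X k n
    rw [hochExt_iota S ι c hbr hco φ hι, hochMu_iota S ι c hbr hco φ hι]
    apply Prod.ext
    · rfl
    · show S.hact (c X) k = S.hact (c X) k + Coalgebra.counit (R := ℝ) (ι X) • n
      rw [hcounit, zero_smul, add_zero]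
  · intro a b ha hb k n
    rw [map_add, LinearMap.add_apply, ha k n, hb k n]
    apply Prod.ext
    · show a * k + b * k = (a + b) * k
      rw [add_mul]
    · show (S.hact (hochMu S ι c hbr hco φ a) k + Coalgebra.counit (R := ℝ) a • n)
          + (S.hact (hochMu S ι c hbr hco φ b) k + Coalgebra.counit (R := ℝ) b • n)
        = S.hact (hochMu S ι c hbr hco φ (a + b)) k + Coalgebra.counit (R := ℝ) (a + b) • n
      rw [map_add, map_add, LinearMap.add_apply, map_add, add_smul]
      abel
  · intro a b ha hb k n
    have hmuab : hochMu S ι c hbr hco φ (a * b)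
        = S.hact (hochMu S ι c hbr hco φ a) b
          + Coalgebra.counit (R := ℝ) a • hochMu S ι c hbr hco φ b := by
      rw [hochMu_apply, map_mul, Module.End.mul_apply]
      rw [show hochExt S ι c hbr hco φ b ((1 : H), (0 : M))
          = (b, hochMu S ι c hbr hco φ b) by
        rw [hb]; simp [S.hact_one]]
      rw [ha b (hochMu S ι c hbr hco φ b)]
    rw [map_mul, Module.End.mul_apply, hb k n,
      ha (b * k) (S.hact (hochMu S ι c hbr hco φ b) k + Coalgebra.counit (R := ℝ) b • n)]
    apply Prod.ext
    · show a * (b * k) = a * b * k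
      rw [mul_assoc]
    · show S.hact (hochMu S ι c hbr hco φ a) (b * k)
          + Coalgebra.counit (R := ℝ) a
            • (S.hact (hochMu S ι c hbr hco φ b) k + Coalgebra.counit (R := ℝ) b • n)
        = S.hact (hochMu S ι c hbr hco φ (a * b)) k
          + Coalgebra.counit (R := ℝ) (a * b) • n
      rw [hmuab, map_add, LinearMap.add_apply, map_smul, S.hact_mul, Bialgebra.counit_mul,
        smul_add, smul_smul, LinearMap.smul_apply]
      abel

theorem hochMu_cocycle
    (hcounit : ∀ X : 𝔤, Coalgebra.counit (R := ℝ) (ι X) = 0) (h : H) :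
    hochMu S ι c hbr hco φ ∘ₗ LinearMap.mulLeft ℝ h
      = S.hact (hochMu S ι c hbr hco φ h) + Coalgebra.counit (R := ℝ) h • hochMu S ι c hbr hco φ := by
  ext k
  have e1 := hochExt_apply S ι c hbr hco φ hι hcounit k 1 0
  have e2 := hochExt_apply S ι c hbr hco φ hι hcounit h k (hochMu S ι c hbr hco φ k)
  simp only [LinearMap.comp_apply, LinearMap.mulLeft_apply, LinearMap.add_apply,
    LinearMap.smul_apply]
  rw [hochMu_apply, map_mul, Module.End.mul_apply]
  rw [show (hochExt S ι c hbr hco φ k ((1 : H), (0 : M))) = (k, hochMu S ι c hbr hco φ k) by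
    rw [e1]; simp [S.hact_one]]
  rw [e2]

end Construction

end Stmt14Aux

section UEA

variable {𝔤 H B M : Type*} [LieRing 𝔤] [LieAlgebra ℝ 𝔤]
  [Ring H] [HopfAlgebra ℝ H] [StarRing H] [StarModule ℝ H]
  [Ring B] [Algebra ℝ B] [StarRing B] [StarModule ℝ B]
  [AddCommGroup M] [Module ℝ M] [StarAddMonoid M] [StarModule ℝ M]

/-- A Lie algebra 1-cocycle `c : 𝔤 → Z_B(M)_sa`: an `ℝ`-linear map valued in the
self-adjoint centre of `M` over `B`, with `c(X) ◁ Y - c(Y) ◁ X - c ⁅X,Y⁆ = 0`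
(the `𝔤`-action on `M` being `m ◁ X := m ◁ ι X`). -/
def IsLieCocycle {ρ : RightHopfModuleStarAlgebra ℝ H B}
    (S : EquivStarBimodule ℝ H B M ρ) (ι : 𝔤 →ₗ[ℝ] H) (c : 𝔤 →ₗ[ℝ] M) : Prop :=
  (∀ X : 𝔤, star (c X) = c X ∧ ∀ b : B, S.lact b (c X) = S.ract (c X) b) ∧
  (∀ X Y : 𝔤, S.hact (c X) (ι Y) - S.hact (c Y) (ι X) - c ⁅X, Y⁆ = 0)

/-- Let `H = U(𝔤)` be the universal enveloping algebra of a real Lie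
algebra `𝔤` — a Hopf `*`-algebra in which `𝔤` is primitive with `ι X` skew-adjoint —
let `B` be a right `𝔤`-module `*`-algebra and `M` a right `𝔤`-equivariant
`B`-`*`-bimodule.  Then restriction to `𝔤` gives an `ℝ`-linear isomorphism from the lazy
Hochschild 1-cocycles `ZH¹_ℓ(H;M)` onto the Lie algebra 1-cocycles `Z¹(𝔤, Z_B(M)_sa)`,
carrying the Hochschild coboundaries to the Lie algebra coboundaries `m ↦ (X ↦ m ◁ X)`. -/
theorem stmt14
    (hH : IsHopfStar ℝ H)
    (φ : UniversalEnvelopingAlgebra ℝ 𝔤 ≃ₐ[ℝ] H)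
    (ι : 𝔤 →ₗ[ℝ] H)
    (hι : ∀ X : 𝔤, ι X = φ (UniversalEnvelopingAlgebra.ι ℝ X))
    (hprim : ∀ X : 𝔤, Coalgebra.comul (R := ℝ) (ι X) = ι X ⊗ₜ[ℝ] 1 + 1 ⊗ₜ[ℝ] ι X)
    (hcounit : ∀ X : 𝔤, Coalgebra.counit (R := ℝ) (ι X) = 0)
    (hantipode : ∀ X : 𝔤, HopfAlgebra.antipode (R := ℝ) (ι X) = - ι X)
    (hstar : ∀ X : 𝔤, star (ι X) = - ι X)
    (ρ : RightHopfModuleStarAlgebra ℝ H B)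
    (S : EquivStarBimodule ℝ H B M ρ) :
    -- restriction lands in the Lie algebra cocycles
    (∀ μ : H →ₗ[ℝ] M, IsLazyHochschildCocycle S μ → IsLieCocycle S ι (μ ∘ₗ ι)) ∧
    -- restriction is ℝ-linear
    (∀ (μ ν : H →ₗ[ℝ] M) (s t : ℝ),
      (s • μ + t • ν) ∘ₗ ι = s • (μ ∘ₗ ι) + t • (ν ∘ₗ ι)) ∧
    -- restriction is injective on the lazy Hochschild 1-cocycles
    (∀ μ ν : H →ₗ[ℝ] M, IsLazyHochschildCocycle S μ → IsLazyHochschildCocycle S ν →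
      μ ∘ₗ ι = ν ∘ₗ ι → μ = ν) ∧
    -- restriction is surjective onto the Lie algebra 1-cocycles
    (∀ c : 𝔤 →ₗ[ℝ] M, IsLieCocycle S ι c →
      ∃ μ : H →ₗ[ℝ] M, IsLazyHochschildCocycle S μ ∧ μ ∘ₗ ι = c) ∧
    -- restriction carries Hochschild coboundaries to Lie algebra coboundaries
    (∀ m : M, star m = m → (∀ b : B, S.lact b m = S.ract m b) →
      hochCobound S m ∘ₗ ι = S.hact m ∘ₗ ι) := by
  have hbr := iota_bracket φ ι hι
  refine ⟨?_, ?_, ?_, ?_, ?_⟩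
  · -- part 1
    intro μ hμ
    obtain ⟨hstar', hcent, h1, hcoc⟩ := hμ
    have hμ' : ∀ h k : H, μ (h * k)
        = S.hact (μ h) k + Coalgebra.counit (R := ℝ) h • μ k := by
      intro h k
      have h0 := LinearMap.congr_fun (hcoc h) k
      simpa only [LinearMap.comp_apply, LinearMap.mulLeft_apply, LinearMap.add_apply,
        LinearMap.smul_apply] using h0
    constructor
    · intro X
      constructor
      · have h2 := LinearMap.congr_fun hstar' (ι X)
        have e : convStar μ (ι X) = star (μ (ι X)) := by
          show star (μ (star (HopfAlgebra.antipode (R := ℝ) (ι X)))) = _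
          rw [hantipode, star_neg, hstar, neg_neg]
        simp only [LinearMap.comp_apply]
        rw [← e, h2]
      · intro b
        have hc := LinearMap.congr_fun (hcent b) (ι X)
        simp only [convL, convR, LinearMap.comp_apply] at hc
        rw [hprim] at hc
        simp only [map_add, TensorProduct.map_tmul, TensorProduct.lift.tmul] at hc
        rw [h1, ρ.act_one] at hc
        simpa [LinearMap.comp_apply] using hc
    · intro X Y
      simp only [LinearMap.comp_apply]
      rw [hbr X Y, map_sub, hμ' (ι X) (ι Y), hμ' (ι Y) (ι X), hcounit, hcounit]
      simp only [zero_smul, add_zero]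
      abel
  · -- part 2
    intro μ ν s t
    rw [LinearMap.add_comp, LinearMap.smul_comp, LinearMap.smul_comp]
  · -- part 3
    intro μ ν hμ hν hagree
    exact deriv_ext φ ι hι hμ.2.2.2 hν.2.2.2 (by rw [hμ.2.2.1, hν.2.2.1])
      fun X => LinearMap.congr_fun hagree X
  · -- part 4
    intro c hc
    obtain ⟨hc1, hc2⟩ := hc
    have hμι : ∀ X, hochMu S ι c hbr hc2 φ (ι X) = c X :=
      fun X => hochMu_iota S ι c hbr hc2 φ hι X
    have h1 : hochMu S ι c hbr hc2 φ 1 = 0 := hochMu_one S ι c hbr hc2 φ hι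
    have hcoc := hochMu_cocycle S ι c hbr hc2 φ hι hcounit
    refine ⟨hochMu S ι c hbr hc2 φ, ⟨?_, ?_, h1, hcoc⟩, ?_⟩
    · exact star_of_deriv φ ι hι hH hprim hcounit hantipode hstar h1 hcoc
        (fun X => by rw [hμι X, (hc1 X).1])
    · exact centrality_of_deriv φ ι hι hprim h1 hcoc
        (fun X b' => by rw [hμι X]; exact (hc1 X).2 b')
    · ext X
      simp only [LinearMap.comp_apply]
      exact hμι X
  · -- part 5
    intro m hm1 hm2
    ext X
    simp only [hochCobound, LinearMap.comp_apply, LinearMap.sub_apply,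
      LinearMap.smulRight_apply, hcounit, zero_smul, sub_zero]

end UEA
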